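/- Let A be a ring and S ⊆ A a central subset (every s ∈ S commutes with every element of A). Then the universal S-inverting ring A[S⁻¹] = A ∗_{ℤ⟨S⟩} ℤ⟨S,S⁻¹⟩ is canonically isomorphic to A ⊗_{ℤ[S]} ℤ[S,S⁻¹], the base change along the commutative localisation of the polynomial ring ℤ[S] at the multiplicative set generated by S; moreover A[S⁻¹] is flat as a left (and right) A-module. -/

import Mathlib

/-!
STATEMENT 9: let `A` be a ring and `S ⊆ A` a central subset.  Then the universal
`S`-inverting ring `A[S⁻¹]` is canonically isomorphic to `A ⊗_{ℤ[S]} ℤ[S,S⁻¹]`, the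
base change along the commutative localisation of the polynomial ring `ℤ[S]` at the
multiplicative set generated by `S`; moreover `A[S⁻¹]` is flat as a left (and right)
`A`-module (flatness expressed by the equational criterion).
-/


section Aux

variable {A : Type} [Ring A] {S : Set A} {L : Type} [Ring L] (f : A →+* L)

/-- Generation: any subring of `L` containing the image of `f` and the inverses of the
`f s` is all of `L`. -/
theorem st9_top
    (hinv : ∀ s ∈ S, IsUnit (f s))
    (huniv : ∀ (C : Type) [Ring C] (g : A →+* C), (∀ s ∈ S, IsUnit (g s)) →
        ∃! h : L →+* C, h.comp f = g)
    (P : Subring L) (hmem : ∀ a, f a ∈ P)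
    (hinvmem : ∀ s, s ∈ S → ∃ y ∈ P, y * f s = 1 ∧ f s * y = 1) :
    ∀ x : L, x ∈ P := by
  let f' : A →+* P := f.codRestrict P.toSubsemiring hmem
  have hinv' : ∀ s ∈ S, IsUnit (f' s) := by
    intro s hs
    obtain ⟨y, hyP, hy1, hy2⟩ := hinvmem s hs
    refine isUnit_iff_exists.2 ⟨⟨y, hyP⟩, ?_, ?_⟩ <;>
      · apply Subtype.ext
        simpa [f'] using (by assumption)
  obtain ⟨h', hh', -⟩ := huniv P f' hinv'
  obtain ⟨h₀, -, hu⟩ := huniv L f hinv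
  have e1 : (P.subtype.comp h') = RingHom.id L := by
    have h1 : P.subtype.comp h' = h₀ := hu _ (by
      ext a
      exact congrArg Subtype.val (RingHom.congr_fun hh' a))
    have h2 : RingHom.id L = h₀ := hu _ (by ext a; rfl)
    rw [h1, ← h2]
  intro x
  have hx : P.subtype (h' x) = x := RingHom.congr_fun e1 x
  rw [← hx]; exact (h' x).2

theorem st9_central
    (hinv : ∀ s ∈ S, IsUnit (f s))
    (huniv : ∀ (C : Type) [Ring C] (g : A →+* C), (∀ s ∈ S, IsUnit (g s)) →
        ∃! h : L →+* C, h.comp f = g) :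
    ∀ z : A, (∀ a, z * a = a * z) → ∀ x : L, f z * x = x * f z := by
  intro z hz x
  have hx : x ∈ Subring.centralizer (f '' {w : A | ∀ a, w * a = a * w}) := by
    refine st9_top f hinv huniv _ ?_ ?_ x
    · intro a
      rw [Subring.mem_centralizer_iff]
      rintro y ⟨w, hw, rfl⟩
      rw [← map_mul, ← map_mul, hw a]
    · intro s hs
      obtain ⟨u, hu⟩ := hinv s hs
      refine ⟨↑u⁻¹, ?_, by simp [hu], by simp [hu]⟩
      rw [Subring.mem_centralizer_iff]
      rintro y ⟨w, hw, rfl⟩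
      have hco : Commute (f w) ↑u := by
        rw [hu]
        show f w * f s = f s * f w
        rw [← map_mul, ← map_mul, hw s]
      exact (hco.units_inv_right).eq
  exact Subring.mem_centralizer_iff.mp hx (f z) ⟨z, hz, rfl⟩

theorem st9_closure_central (hc : ∀ s ∈ S, ∀ a : A, s * a = a * s) :
    ∀ t ∈ Submonoid.closure S, ∀ a : A, t * a = a * t := by
  intro t ht
  induction ht using Submonoid.closure_induction with
  | mem s hs => exact hc s hs
  | one => simp
  | mul x y _ _ hx hy => intro a; rw [mul_assoc, hy a, ← mul_assoc, hx a, mul_assoc]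

theorem st9_closure_unit (hinv : ∀ s ∈ S, IsUnit (f s)) :
    ∀ t ∈ Submonoid.closure S, IsUnit (f t) := by
  intro t ht
  induction ht using Submonoid.closure_induction with
  | mem s hs => exact hinv s hs
  | one => simp
  | mul x y _ _ hx hy => rw [map_mul]; exact hx.mul hy

/-- every element of `L` is a fraction `f a * (f t)⁻¹`. -/
theorem st9_frac (hc : ∀ s ∈ S, ∀ a : A, s * a = a * s)
    (hinv : ∀ s ∈ S, IsUnit (f s))
    (huniv : ∀ (C : Type) [Ring C] (g : A →+* C), (∀ s ∈ S, IsUnit (g s)) →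
        ∃! h : L →+* C, h.comp f = g) :
    ∀ x : L, ∃ a t, t ∈ Submonoid.closure S ∧ x * f t = f a := by
  have hcen := st9_closure_central (S := S) hc
  let P : Subring L :=
    { carrier := {x : L | ∃ a t, t ∈ Submonoid.closure S ∧ x * f t = f a}
      zero_mem' := ⟨0, 1, one_mem _, by simp⟩
      one_mem' := ⟨1, 1, one_mem _, by simp⟩
      add_mem' := by
        rintro x₁ x₂ ⟨a₁, t₁, ht₁, h₁⟩ ⟨a₂, t₂, ht₂, h₂⟩
        refine ⟨a₁ * t₂ + a₂ * t₁, t₁ * t₂, mul_mem ht₁ ht₂, ?_⟩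
        have e1 : x₁ * f (t₁ * t₂) = f (a₁ * t₂) := by
          rw [map_mul, ← mul_assoc, h₁, ← map_mul]
        have e2 : x₂ * f (t₁ * t₂) = f (a₂ * t₁) := by
          rw [hcen t₁ ht₁ t₂, map_mul, ← mul_assoc, h₂, ← map_mul]
        rw [add_mul, e1, e2, ← map_add]
      mul_mem' := by
        rintro x₁ x₂ ⟨a₁, t₁, ht₁, h₁⟩ ⟨a₂, t₂, ht₂, h₂⟩
        refine ⟨a₁ * a₂, t₂ * t₁, mul_mem ht₂ ht₁, ?_⟩
        calc x₁ * x₂ * f (t₂ * t₁)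
            = x₁ * (x₂ * f t₂ * f t₁) := by
              rw [map_mul, mul_assoc x₁ x₂, mul_assoc x₂]
          _ = x₁ * (f a₂ * f t₁) := by rw [h₂]
          _ = x₁ * (f t₁ * f a₂) := by rw [← map_mul, ← map_mul, hcen t₁ ht₁ a₂]
          _ = x₁ * f t₁ * f a₂ := by rw [mul_assoc]
          _ = f (a₁ * a₂) := by rw [h₁, map_mul]
      neg_mem' := by
        rintro x ⟨a, t, ht, hx⟩
        exact ⟨-a, t, ht, by rw [neg_mul, hx, map_neg]⟩ }
  intro x
  refine st9_top f hinv huniv P (fun a => ⟨a, 1, one_mem _, by simp⟩) ?_ x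
  intro s hs
  obtain ⟨u, hu⟩ := hinv s hs
  exact ⟨↑u⁻¹, ⟨1, s, Submonoid.subset_closure hs, by simp [hu]⟩, by simp [hu], by simp [hu]⟩


theorem st9_loc_ext {R : Type*} [CommRing R] (M : Submonoid R) {P : Type*} [Ring P]
    (χ₁ χ₂ : Localization M →+* P)
    (h : χ₁.comp (algebraMap R (Localization M)) = χ₂.comp (algebraMap R (Localization M))) :
    χ₁ = χ₂ := by
  ext z
  obtain ⟨⟨r, m⟩, rfl⟩ := IsLocalization.mk'_surjective M z
  have hm : IsUnit (χ₁ (algebraMap R (Localization M) m)) :=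
    (IsLocalization.map_units (Localization M) m).map χ₁
  apply hm.mul_right_cancel
  have e1 : χ₁ (IsLocalization.mk' _ r m) * χ₁ (algebraMap R (Localization M) m)
      = χ₁ (algebraMap R (Localization M) r) := by
    rw [← map_mul, IsLocalization.mk'_spec]
  have e2 : χ₂ (IsLocalization.mk' _ r m) * χ₂ (algebraMap R (Localization M) m)
      = χ₂ (algebraMap R (Localization M) r) := by
    rw [← map_mul, IsLocalization.mk'_spec]
  have hr : χ₁ (algebraMap R (Localization M) r) = χ₂ (algebraMap R (Localization M) r) :=
    RingHom.congr_fun h r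
  have hmr : χ₁ (algebraMap R (Localization M) (m : R))
      = χ₂ (algebraMap R (Localization M) (m : R)) := RingHom.congr_fun h (m : R)
  rw [e1, hr, ← e2, hmr]

theorem st9_flat_common (hc : ∀ s ∈ S, ∀ a : A, s * a = a * s)
    (hfrac : ∀ x : L, ∃ a t, t ∈ Submonoid.closure S ∧ x * f t = f a)
    {n : ℕ} (x : Fin n → L) :
    ∃ (T0 : A) (b' : Fin n → A), T0 ∈ Submonoid.closure S ∧
      ∀ i, x i * f T0 = f (b' i) := by
  choose b t ht hbt using fun i => hfrac (x i)
  have htc : ∀ i, t i ∈ Submonoid.center A := fun i =>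
    Submonoid.mem_center_iff.2 fun g => (st9_closure_central hc _ (ht i) g).symm
  let t' : Fin n → Submonoid.center A := fun i => ⟨t i, htc i⟩
  refine ⟨↑(∏ i, t' i), fun i => b i * ↑(∏ j ∈ Finset.univ.erase i, t' j), ?_, ?_⟩
  · refine Finset.prod_induction t' (fun z => (z : A) ∈ Submonoid.closure S)
      (fun a b ha hb => ?_) (one_mem _) (fun i _ => ht i)
    exact mul_mem ha hb
  · intro i
    have hsplit : ((∏ i, t' i : Submonoid.center A) : A)
        = t i * ↑(∏ j ∈ Finset.univ.erase i, t' j) := by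
      conv_lhs => rw [← Finset.mul_prod_erase Finset.univ t' (Finset.mem_univ i)]
      rfl
    rw [hsplit, map_mul, ← mul_assoc, hbt i, ← map_mul]

theorem st9_flat_left (hc : ∀ s ∈ S, ∀ a : A, s * a = a * s)
    (hinv : ∀ s ∈ S, IsUnit (f s))
    (hfrac : ∀ x : L, ∃ a t, t ∈ Submonoid.closure S ∧ x * f t = f a)
    (hker : ∀ a : A, f a = 0 → ∃ t ∈ Submonoid.closure S, t * a = 0) :
    ∀ (n : ℕ) (a : Fin n → A) (x : Fin n → L),
        (∑ i, f (a i) * x i) = 0 →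
          ∃ (m : ℕ) (y : Fin m → L) (c : Fin n → Fin m → A),
            (∀ i, x i = ∑ j, f (c i j) * y j) ∧ ∀ j, (∑ i, a i * c i j) = 0 := by
  intro n a x hsum
  obtain ⟨T0, b', hT0mem, hxb⟩ := st9_flat_common f hc hfrac x
  have hsum0 : f (∑ i, a i * b' i) = 0 := by
    rw [map_sum]
    calc ∑ i, f (a i * b' i) = ∑ i, f (a i) * (x i * f T0) := by
          refine Finset.sum_congr rfl fun i _ => ?_
          rw [map_mul, hxb i]
      _ = (∑ i, f (a i) * x i) * f T0 := by
          rw [Finset.sum_mul]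
          exact Finset.sum_congr rfl fun i _ => (mul_assoc _ _ _).symm
      _ = 0 := by rw [hsum, zero_mul]
  obtain ⟨u, hu, huz⟩ := hker _ hsum0
  have htu : T0 * u ∈ Submonoid.closure S := mul_mem hT0mem hu
  obtain ⟨v, hv⟩ := st9_closure_unit f hinv _ htu
  refine ⟨1, fun _ => ↑v⁻¹, fun i _ => b' i * u, ?_, ?_⟩
  · intro i
    rw [Fin.sum_univ_one]
    have e : f (b' i * u) = x i * ↑v := by
      rw [map_mul, ← hxb i, mul_assoc, ← map_mul, ← hv]
    rw [e, mul_assoc, Units.mul_inv, mul_one]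
  · intro j
    calc ∑ i, a i * (b' i * u) = (∑ i, a i * b' i) * u := by
          rw [Finset.sum_mul]
          exact Finset.sum_congr rfl fun i _ => (mul_assoc _ _ _).symm
      _ = u * (∑ i, a i * b' i) := (st9_closure_central hc u hu _).symm
      _ = 0 := huz

theorem st9_flat_right (hc : ∀ s ∈ S, ∀ a : A, s * a = a * s)
    (hinv : ∀ s ∈ S, IsUnit (f s))
    (hfcen : ∀ t ∈ Submonoid.closure S, ∀ x : L, f t * x = x * f t)
    (hfrac : ∀ x : L, ∃ a t, t ∈ Submonoid.closure S ∧ x * f t = f a)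
    (hker : ∀ a : A, f a = 0 → ∃ t ∈ Submonoid.closure S, t * a = 0) :
    ∀ (n : ℕ) (a : Fin n → A) (x : Fin n → L),
        (∑ i, x i * f (a i)) = 0 →
          ∃ (m : ℕ) (y : Fin m → L) (c : Fin m → Fin n → A),
            (∀ i, x i = ∑ j, y j * f (c j i)) ∧ ∀ j, (∑ i, c j i * a i) = 0 := by
  intro n a x hsum
  obtain ⟨T0, b', hT0mem, hxb⟩ := st9_flat_common f hc hfrac x
  have hsum0 : f (∑ i, b' i * a i) = 0 := by
    rw [map_sum]
    calc ∑ i, f (b' i * a i) = ∑ i, f T0 * (x i * f (a i)) := by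
          refine Finset.sum_congr rfl fun i _ => ?_
          rw [map_mul, ← hxb i, ← hfcen T0 hT0mem (x i), mul_assoc]
      _ = f T0 * ∑ i, x i * f (a i) := by rw [Finset.mul_sum]
      _ = 0 := by rw [hsum, mul_zero]
  obtain ⟨u, hu, huz⟩ := hker _ hsum0
  have htu : u * T0 ∈ Submonoid.closure S := mul_mem hu hT0mem
  obtain ⟨v, hv⟩ := st9_closure_unit f hinv _ htu
  refine ⟨1, fun _ => ↑v⁻¹, fun _ i => u * b' i, ?_, ?_⟩
  · intro i
    rw [Fin.sum_univ_one]
    have hvx : ↑v * x i = f (u * b' i) := by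
      rw [hv, map_mul, map_mul, ← hxb i, mul_assoc, hfcen T0 hT0mem (x i)]
    rw [← hvx, ← mul_assoc, Units.inv_mul, one_mul]
  · intro j
    calc ∑ i, (u * b' i) * a i = u * (∑ i, b' i * a i) := by
          rw [Finset.mul_sum]
          exact Finset.sum_congr rfl fun i _ => (mul_assoc _ _ _)
      _ = 0 := huz


open scoped TensorProduct in
theorem st9_main (R : Type) [CommRing R] (M : Submonoid R) {A : Type} [Ring A] [Algebra R A]
    {S : Set A} {L : Type} [Ring L] (f : A →+* L)
    (hc : ∀ s ∈ S, ∀ a : A, s * a = a * s)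
    (hinv : ∀ s ∈ S, IsUnit (f s))
    (huniv : ∀ (C : Type) [Ring C] (g : A →+* C), (∀ s ∈ S, IsUnit (g s)) →
        ∃! h : L →+* C, h.comp f = g)
    (hSM : ∀ s ∈ S, ∃ r ∈ M, algebraMap R A r = s)
    (hMS : ∀ r ∈ M, algebraMap R A r ∈ Submonoid.closure S) :
    (∃ e : L ≃+* (A ⊗[R] Localization M),
        e.toRingHom.comp f = Algebra.TensorProduct.includeLeftRingHom) ∧
    (∀ a : A, f a = 0 → ∃ t ∈ Submonoid.closure S, t * a = 0) := by
  classical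
  -- the algebra structure on L
  letI : Algebra R L := (f.comp (algebraMap R A)).toAlgebra'
    (fun r x => st9_central f hinv huniv _ (fun a => Algebra.commutes r a) x)
  -- key: the image of `r ⊗ 1` when `r` comes from `R`
  have key : ∀ r : R, ((algebraMap R A r) ⊗ₜ[R] (1 : Localization M) : A ⊗[R] Localization M)
      = (1 : A) ⊗ₜ[R] (algebraMap R (Localization M) r) := by
    intro r
    rw [Algebra.algebraMap_eq_smul_one, Algebra.algebraMap_eq_smul_one,
      TensorProduct.smul_tmul]
  -- the map g : A → T inverts S
  have hg : ∀ s ∈ S, IsUnit ((Algebra.TensorProduct.includeLeftRingHom :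
      A →+* A ⊗[R] Localization M) s) := by
    intro s hs
    obtain ⟨r, hr, hrs⟩ := hSM s hs
    have : (Algebra.TensorProduct.includeLeftRingHom :
        A →+* A ⊗[R] Localization M) s = (Algebra.TensorProduct.includeRight :
          Localization M →ₐ[R] A ⊗[R] Localization M) (algebraMap R (Localization M) r) := by
      rw [Algebra.TensorProduct.includeLeftRingHom_apply,
        Algebra.TensorProduct.includeRight_apply, ← hrs, key]
    rw [this]
    exact (IsLocalization.map_units (Localization M) ⟨r, hr⟩).map _
  obtain ⟨h, hh, hhu⟩ := huniv (A ⊗[R] Localization M) Algebra.TensorProduct.includeLeftRingHom hg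
  -- the map ψ : Localization M → L
  have hcent : ∀ r : R, (f (algebraMap R A r)) ∈ Subring.center L :=
    fun r => Subring.mem_center_iff.2 fun x =>
      (st9_central f hinv huniv _ (fun a => Algebra.commutes r a) x).symm
  let φ : R →+* Subring.center L := (f.comp (algebraMap R A)).codRestrict _ hcent
  have hφ : ∀ m : M, IsUnit (φ m) := by
    intro m
    obtain ⟨u, hu⟩ := st9_closure_unit f hinv _ (hMS m m.2)
    have hinvmem : (↑u⁻¹ : L) ∈ Subring.center L := by
      rw [Subring.mem_center_iff]
      intro x
      have hco : Commute x ↑u := by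
        show x * ↑u = ↑u * x
        rw [hu]
        exact (Subring.mem_center_iff.1 (hcent m) x).symm ▸ rfl
      exact (hco.units_inv_right).eq
    refine isUnit_iff_exists.2 ⟨⟨↑u⁻¹, hinvmem⟩, ?_, ?_⟩ <;>
      · apply Subtype.ext
        simp [φ, hu]
  let ψ : Localization M →+* L := (Subring.center L).subtype.comp (IsLocalization.lift hφ)
  have hψσ : ∀ r : R, ψ (algebraMap R (Localization M) r) = f (algebraMap R A r) := by
    intro r
    show ((IsLocalization.lift hφ) (algebraMap R (Localization M) r) : L) = _
    rw [IsLocalization.lift_eq]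
    rfl
  have hψcen : ∀ q x, ψ q * x = x * ψ q := by
    intro q x
    exact ((Subring.mem_center_iff.1 (IsLocalization.lift hφ q).2) x).symm
  -- assemble the algebra maps
  let fA : A →ₐ[R] L := { toRingHom := f, commutes' := fun r => rfl }
  let ψA : (Localization M) →ₐ[R] L := { toRingHom := ψ, commutes' := fun r => hψσ r }
  let k' : (A ⊗[R] Localization M) →ₐ[R] L :=
    Algebra.TensorProduct.lift fA ψA (fun a q => (hψcen q (fA a)).symm)
  have hk'tmul : ∀ (a : A) (q : Localization M), k' (a ⊗ₜ q) = f a * ψ q := by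
    intro a q
    exact Algebra.TensorProduct.lift_tmul _ _ _ a q
  have hkg : (k'.toRingHom).comp (Algebra.TensorProduct.includeLeftRingHom :
      A →+* A ⊗[R] Localization M) = f := by
    ext a
    show k' (a ⊗ₜ 1) = f a
    rw [hk'tmul, map_one, mul_one]
  -- h as an algebra hom
  let hA : L →ₐ[R] (A ⊗[R] Localization M) :=
    { toRingHom := h,
      commutes' := fun r => RingHom.congr_fun hh (algebraMap R A r) }
  -- h ∘ ψ = includeRight
  have hψT : h.comp ψ = (Algebra.TensorProduct.includeRight :
      Localization M →ₐ[R] A ⊗[R] Localization M).toRingHom := by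
    apply st9_loc_ext M
    ext r
    show h (ψ (algebraMap R (Localization M) r)) = (1:A) ⊗ₜ (algebraMap R (Localization M) r)
    have e : h (f (algebraMap R A r)) = (algebraMap R A r) ⊗ₜ[R] (1 : Localization M) :=
      RingHom.congr_fun hh (algebraMap R A r)
    rw [hψσ, e, key]
  -- h ∘ k = id
  have hright : hA.comp k' = AlgHom.id R (A ⊗[R] Localization M) := by
    apply Algebra.TensorProduct.ext'
    intro a q
    show h (k' (a ⊗ₜ q)) = a ⊗ₜ q
    rw [hk'tmul, map_mul]
    have e1 : h (f a) = a ⊗ₜ[R] (1 : Localization M) := RingHom.congr_fun hh a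
    have e2 : h (ψ q) = (1:A) ⊗ₜ[R] q := RingHom.congr_fun hψT q
    rw [e1, e2, Algebra.TensorProduct.tmul_mul_tmul, mul_one, one_mul]
  -- k ∘ h = id
  have hleft : (k'.toRingHom.comp h) = RingHom.id L := by
    obtain ⟨h₀, -, hu⟩ := huniv L f hinv
    have h1 : k'.toRingHom.comp h = h₀ := hu _ (by
      show (k'.toRingHom.comp h).comp f = f
      rw [RingHom.comp_assoc, hh, hkg])
    have h2 : RingHom.id L = h₀ := hu _ (by ext a; rfl)
    rw [h1, ← h2]
  have hker : ∀ a : A, f a = 0 → ∃ t ∈ Submonoid.closure S, t * a = 0 := by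
    intro a ha
    have h1 : (a ⊗ₜ[R] (1 : Localization M) : A ⊗[R] Localization M) = 0 := by
      have e : h (f a) = a ⊗ₜ[R] (1 : Localization M) := RingHom.congr_fun hh a
      rw [ha, map_zero] at e
      exact e.symm
    have h2 : ((TensorProduct.mk R (Localization M) A 1) a) = 0 := by
      show ((1 : Localization M) ⊗ₜ[R] a : (Localization M) ⊗[R] A) = 0
      calc ((1 : Localization M) ⊗ₜ[R] a : (Localization M) ⊗[R] A)
          = TensorProduct.comm R A (Localization M) (a ⊗ₜ[R] (1 : Localization M)) :=
            (TensorProduct.comm_tmul R A (Localization M) a 1).symm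
        _ = TensorProduct.comm R A (Localization M) 0 := by rw [h1]
        _ = 0 := (TensorProduct.comm R A (Localization M)).map_zero
    haveI : IsLocalizedModule M (TensorProduct.mk R (Localization M) A 1) :=
      (isLocalizedModule_iff_isBaseChange M (Localization M) _).mpr
        (TensorProduct.isBaseChange R A (Localization M))
    obtain ⟨c, hc2⟩ := IsLocalizedModule.exists_of_eq
      (S := M) (f := TensorProduct.mk R (Localization M) A 1)
      (x₁ := a) (x₂ := 0) (by rw [h2, map_zero])
    refine ⟨algebraMap R A c, hMS c c.2, ?_⟩
    have : (c : R) • a = 0 := by simpa using (show (c : R) • a = _ from hc2)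
    rwa [Algebra.smul_def] at this
  refine ⟨⟨RingEquiv.ofRingHom h k'.toRingHom ?_ hleft, ?_⟩, hker⟩
  · refine RingHom.ext fun z => ?_
    exact AlgHom.congr_fun hright z
  · ext a
    exact RingHom.congr_fun hh a

end Aux

theorem statement9 (A : Type) [Ring A] (S : Set A)
    -- S is central in A:
    (hc : ∀ s ∈ S, ∀ a : A, s * a = a * s)
    -- A is an algebra over the polynomial ring ℤ[S], each variable mapping to the
    -- corresponding element of S:
    [Algebra (MvPolynomial ↥S ℤ) A]
    (halg : ∀ s : ↥S, algebraMap (MvPolynomial ↥S ℤ) A (MvPolynomial.X s) = (s : A))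
    -- f : A → L is the universal S-inverting ring homomorphism:
    (L : Type) [Ring L] (f : A →+* L)
    (hinv : ∀ s ∈ S, IsUnit (f s))
    (huniv : ∀ (C : Type) [Ring C] (g : A →+* C), (∀ s ∈ S, IsUnit (g s)) →
        ∃! h : L →+* C, h.comp f = g) :
    -- L = A[S⁻¹] is canonically isomorphic to A ⊗_{ℤ[S]} ℤ[S,S⁻¹]:
    (∃ e : L ≃+* (TensorProduct (MvPolynomial ↥S ℤ) A
        (Localization (Submonoid.closure
          (Set.range (MvPolynomial.X : ↥S → MvPolynomial ↥S ℤ))))),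
        e.toRingHom.comp f =
          (Algebra.TensorProduct.includeLeftRingHom :
            A →+* (TensorProduct (MvPolynomial ↥S ℤ) A
              (Localization (Submonoid.closure
                (Set.range (MvPolynomial.X : ↥S → MvPolynomial ↥S ℤ))))))) ∧
    -- L = A[S⁻¹] is flat as a left A-module (equational criterion):
    (∀ (n : ℕ) (a : Fin n → A) (x : Fin n → L),
        (∑ i, f (a i) * x i) = 0 →
          ∃ (m : ℕ) (y : Fin m → L) (c : Fin n → Fin m → A),
            (∀ i, x i = ∑ j, f (c i j) * y j) ∧ ∀ j, (∑ i, a i * c i j) = 0) ∧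
    -- and flat as a right A-module (equational criterion):
    (∀ (n : ℕ) (a : Fin n → A) (x : Fin n → L),
        (∑ i, x i * f (a i)) = 0 →
          ∃ (m : ℕ) (y : Fin m → L) (c : Fin m → Fin n → A),
            (∀ i, x i = ∑ j, y j * f (c j i)) ∧ ∀ j, (∑ i, c j i * a i) = 0) := by
  classical
  have hSM : ∀ s ∈ S, ∃ r ∈ (Submonoid.closure
      (Set.range (MvPolynomial.X : ↥S → MvPolynomial ↥S ℤ))),
      algebraMap (MvPolynomial ↥S ℤ) A r = s := by
    intro s hs
    exact ⟨MvPolynomial.X ⟨s, hs⟩,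
      Submonoid.subset_closure (Set.mem_range_self _), halg ⟨s, hs⟩⟩
  have hMS : ∀ r ∈ (Submonoid.closure
      (Set.range (MvPolynomial.X : ↥S → MvPolynomial ↥S ℤ))),
      algebraMap (MvPolynomial ↥S ℤ) A r ∈ Submonoid.closure S := by
    intro r hr
    induction hr using Submonoid.closure_induction with
    | mem p hp =>
        obtain ⟨s, rfl⟩ := hp
        rw [halg s]
        exact Submonoid.subset_closure s.2
    | one => rw [map_one]; exact one_mem _
    | mul p q _ _ hp hq => rw [map_mul]; exact mul_mem hp hq
  obtain ⟨hiso, hker⟩ := st9_main (MvPolynomial ↥S ℤ)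
      (Submonoid.closure (Set.range (MvPolynomial.X : ↥S → MvPolynomial ↥S ℤ)))
      f hc hinv huniv hSM hMS
  have hfcen : ∀ t ∈ Submonoid.closure S, ∀ x : L, f t * x = x * f t :=
    fun t ht x => st9_central f hinv huniv t (st9_closure_central hc t ht) x
  have hfrac := st9_frac f hc hinv huniv
  exact ⟨hiso, st9_flat_left f hc hinv hfrac hker,
    st9_flat_right f hc hinv hfcen hfrac hker⟩
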